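/- Let F = {F_i : i ∈ ℕ} be a countable family of contraction maps on ℝ, each F_i being non-decreasing. If the set D of fixed points of the maps F_i is bounded, then there exists a bounded invariant set for F; indeed the interval I = [inf D, sup D] satisfies F_i(I) ⊆ I for all i, and consequently the closure of the set of fixed points of finite compositions of members of F is a bounded invariant set. -/

import Mathlib

open Metric Set

/-- The set of fixed points of finite (nonempty) compositions of members of the family `F`. -/
def fixedPtsOfComps {X : Type*} (F : ℕ → X → X) : Set X :=
  {x : X | ∃ l : List ℕ, l ≠ [] ∧ l.foldr (fun i y => F i y) x = x}

/-- A nonempty set `E` is invariant for the family `F` if `E = cl(⋃ i, F i '' E)`. -/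
def IsInvariantSet {X : Type*} [TopologicalSpace X] (F : ℕ → X → X) (E : Set X) : Prop :=
  E.Nonempty ∧ E = closure (⋃ i : ℕ, F i '' E)

section Aux
variable (F : ℕ → ℝ → ℝ)

private def gcomp (l : List ℕ) (y : ℝ) : ℝ := l.foldr (fun i y => F i y) y

private lemma gcomp_cons (i : ℕ) (l : List ℕ) (y : ℝ) :
    gcomp F (i :: l) y = F i (gcomp F l y) := rfl

private lemma gcomp_append (l₁ l₂ : List ℕ) (y : ℝ) :
    gcomp F (l₁ ++ l₂) y = gcomp F l₁ (gcomp F l₂ y) := by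
  simp [gcomp, List.foldr_append]

private lemma gcomp_lipschitz {r : ℕ → NNReal} (hr : ∀ i, ContractingWith (r i) (F i))
    (l : List ℕ) : LipschitzWith ((l.map r).prod) (gcomp F l) := by
  induction l with
  | nil => exact LipschitzWith.id
  | cons i t ih =>
    have := ((hr i).2).comp ih
    rw [List.map_cons, List.prod_cons]; exact this

private lemma map_prod_le_one {r : ℕ → NNReal} (hr : ∀ i, ContractingWith (r i) (F i))
    (l : List ℕ) : ((l.map r).prod) ≤ 1 := by
  induction l with
  | nil => simp
  | cons i t ih =>
    rw [List.map_cons, List.prod_cons]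
    calc r i * (t.map r).prod ≤ 1 * 1 := mul_le_mul' (hr i).1.le ih
    _ = 1 := one_mul 1

private lemma map_prod_lt_one {r : ℕ → NNReal} (hr : ∀ i, ContractingWith (r i) (F i))
    {l : List ℕ} (hl : l ≠ []) : ((l.map r).prod) < 1 := by
  cases l with
  | nil => exact absurd rfl hl
  | cons i t =>
    rw [List.map_cons, List.prod_cons]
    calc r i * (t.map r).prod ≤ r i * 1 := mul_le_mul' le_rfl (map_prod_le_one F hr t)
    _ = r i := mul_one _
    _ < 1 := (hr i).1

private lemma gcomp_contracting {r : ℕ → NNReal} (hr : ∀ i, ContractingWith (r i) (F i))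
    {l : List ℕ} (hl : l ≠ []) : ContractingWith ((l.map r).prod) (gcomp F l) :=
  ⟨map_prod_lt_one F hr hl, gcomp_lipschitz F hr l⟩

private lemma gcomp_iterate (l : List ℕ) (n : ℕ) (y : ℝ) :
    (gcomp F l)^[n] y = gcomp F ((List.replicate n l).flatten) y := by
  induction n generalizing y with
  | zero => simp [gcomp]
  | succ n ih =>
    rw [Function.iterate_succ_apply', ih, ← gcomp_append]
    simp [List.replicate_succ]

/-- Key approximation lemma: the image under any `F i` of a fixed point of a composition
lies in the closure of `fixedPtsOfComps F`. -/
private lemma image_mem_closure {r : ℕ → NNReal} (hr : ∀ i, ContractingWith (r i) (F i))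
    (i : ℕ) {z : ℝ} {l : List ℕ} (hl : l ≠ []) (hz : gcomp F l z = z) :
    F i z ∈ closure (fixedPtsOfComps F) := by
  rw [Metric.mem_closure_iff]
  intro ε hε
  set q : NNReal := (l.map r).prod with hqdef
  have hq1 : (q : ℝ) < 1 := by exact_mod_cast map_prod_lt_one F hr hl
  set C : ℝ := dist (F i z) z with hCdef
  have hC0 : 0 ≤ C := dist_nonneg
  have hpos : 0 < C + ε := by linarith
  obtain ⟨n, hn⟩ := exists_pow_lt_of_lt_one (div_pos hε hpos) hq1
  have hn' : (q : ℝ) ^ n * (C + ε) < ε := (lt_div_iff₀ hpos).mp hn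
  have h1 : (q : ℝ) ^ n < 1 := lt_of_lt_of_le hn ((div_le_one hpos).2 (by linarith))
  set J : List ℕ := (List.replicate n l).flatten with hJdef
  have hcons : (i :: J : List ℕ) ≠ [] := List.cons_ne_nil _ _
  have hc := gcomp_contracting F hr hcons
  set w : ℝ := ContractingWith.fixedPoint (gcomp F (i :: J)) hc with hwdef
  have hw : gcomp F (i :: J) w = w := hc.fixedPoint_isFixedPt
  have hwS : w ∈ fixedPtsOfComps F := ⟨i :: J, hcons, hw⟩
  have hw1 : F i ((gcomp F l)^[n] w) = w := by
    rw [gcomp_iterate]; exact hw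
  have hzn : (gcomp F l)^[n] z = z := Function.IsFixedPt.iterate hz n
  set d : ℝ := dist w (F i z) with hddef
  have e1 : d ≤ (r i : ℝ) * dist ((gcomp F l)^[n] w) ((gcomp F l)^[n] z) := by
    calc d = dist (F i ((gcomp F l)^[n] w)) (F i ((gcomp F l)^[n] z)) := by rw [hw1, hzn]
    _ ≤ (r i : ℝ) * dist ((gcomp F l)^[n] w) ((gcomp F l)^[n] z) := (hr i).2.dist_le_mul _ _
  have e2 : dist ((gcomp F l)^[n] w) ((gcomp F l)^[n] z) ≤ (q : ℝ) ^ n * dist w z := by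
    have := ((gcomp_lipschitz F hr l).iterate n).dist_le_mul w z
    rw [← NNReal.coe_pow]
    exact this
  have tri : dist w z ≤ d + C := dist_triangle w (F i z) z
  have hri : (r i : ℝ) ≤ 1 := by exact_mod_cast (hr i).1.le
  have e3 : d ≤ (q : ℝ) ^ n * (d + C) := by
    calc d ≤ (r i : ℝ) * ((q : ℝ) ^ n * dist w z) :=
          e1.trans (mul_le_mul_of_nonneg_left e2 (r i).coe_nonneg)
    _ ≤ 1 * ((q : ℝ) ^ n * (d + C)) := by
          have hq0 : (0:ℝ) ≤ (q : ℝ) ^ n := by positivity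
          have hd0 : (0:ℝ) ≤ dist w z := dist_nonneg
          gcongr
    _ = (q : ℝ) ^ n * (d + C) := one_mul _
  refine ⟨w, hwS, ?_⟩
  rw [dist_comm]
  have h4 : d * (1 - (q : ℝ) ^ n) < ε * (1 - (q : ℝ) ^ n) := by nlinarith [e3, hn']
  exact lt_of_mul_lt_mul_right h4 (by linarith)

end Aux

theorem nondecreasing_bounded_fixed_points_implies_bounded_invariant
    (F : ℕ → ℝ → ℝ) (hF : ∀ i, ∃ r : NNReal, ContractingWith r (F i))
    (hmono : ∀ i, Monotone (F i))
    (x : ℕ → ℝ) (hx : ∀ i, F i (x i) = x i)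
    (hD : Bornology.IsBounded (Set.range x)) :
    (∀ i, F i '' Set.Icc (sInf (Set.range x)) (sSup (Set.range x)) ⊆
        Set.Icc (sInf (Set.range x)) (sSup (Set.range x))) ∧
    Bornology.IsBounded (closure (fixedPtsOfComps F)) ∧
    IsInvariantSet F (closure (fixedPtsOfComps F)) := by
  choose r hr using hF
  set a := sInf (Set.range x) with hadef
  set b := sSup (Set.range x) with hbdef
  have hmem : ∀ i, x i ∈ Set.Icc a b := fun i =>
    ⟨csInf_le hD.bddBelow ⟨i, rfl⟩, le_csSup hD.bddAbove ⟨i, rfl⟩⟩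
  have hri : ∀ i, (r i : ℝ) ≤ 1 := fun i => by exact_mod_cast (hr i).1.le
  have hFa : ∀ i, a ≤ F i a := by
    intro i
    have h := (hr i).2.dist_le_mul a (x i)
    rw [hx i, Real.dist_eq, Real.dist_eq] at h
    have h2 : |a - x i| = x i - a := by
      rw [abs_sub_comm, abs_of_nonneg]; linarith [(hmem i).1]
    have h3 : x i - F i a ≤ |F i a - x i| := by
      rw [abs_sub_comm]; exact le_abs_self _
    have h5 : (r i : ℝ) * (x i - a) ≤ 1 * (x i - a) :=
      mul_le_mul_of_nonneg_right (hri i) (by linarith [(hmem i).1])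
    rw [h2] at h
    linarith
  have hFb : ∀ i, F i b ≤ b := by
    intro i
    have h := (hr i).2.dist_le_mul b (x i)
    rw [hx i, Real.dist_eq, Real.dist_eq] at h
    have h2 : |b - x i| = b - x i := by
      rw [abs_of_nonneg]; linarith [(hmem i).2]
    have h3 : F i b - x i ≤ |F i b - x i| := le_abs_self _
    have h5 : (r i : ℝ) * (b - x i) ≤ 1 * (b - x i) :=
      mul_le_mul_of_nonneg_right (hri i) (by linarith [(hmem i).2])
    rw [h2] at h
    linarith
  have hIcc : ∀ i, F i '' Set.Icc a b ⊆ Set.Icc a b := by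
    rintro i y ⟨z, hz, rfl⟩
    exact ⟨le_trans (hFa i) (hmono i hz.1), le_trans (hmono i hz.2) (hFb i)⟩
  have hab : a ≤ b := le_trans (hmem 0).1 (hmem 0).2
  have gIcc : ∀ l : List ℕ, Set.MapsTo (gcomp F l) (Set.Icc a b) (Set.Icc a b) := by
    intro l
    induction l with
    | nil => intro y hy; simpa [gcomp] using hy
    | cons i t ih =>
      intro y hy
      rw [gcomp_cons]
      exact hIcc i ⟨gcomp F t y, ih hy, rfl⟩
  -- every fixed point of a composition lies in [a, b]
  have hSsub : fixedPtsOfComps F ⊆ Set.Icc a b := by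
    rintro z ⟨l, hl, hz⟩
    have hc := gcomp_contracting F hr hl
    have hc' : ContractingWith ((l.map r).prod)
        ((gIcc l).restrict (gcomp F l) (Set.Icc a b) (Set.Icc a b)) :=
      ⟨hc.1, fun p q => hc.2 p q⟩
    obtain ⟨y, hyI, hyfix, -, -⟩ :=
      hc'.exists_fixedPoint' isClosed_Icc.isComplete (gIcc l) (hmem 0) (edist_ne_top _ _)
    have : z = y := hc.fixedPoint_unique' hz hyfix
    rw [this]; exact hyI
  have hclsub : closure (fixedPtsOfComps F) ⊆ Set.Icc a b :=
    closure_minimal hSsub isClosed_Icc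
  have hne : (closure (fixedPtsOfComps F)).Nonempty := by
    refine ⟨x 0, subset_closure ⟨[0], by simp, ?_⟩⟩
    show F 0 (x 0) = x 0
    exact hx 0
  refine ⟨hIcc, (isBounded_Icc a b).subset hclsub, hne, ?_⟩
  set E := closure (fixedPtsOfComps F) with hEdef
  have himg : ∀ i, F i '' fixedPtsOfComps F ⊆ E := by
    rintro i y ⟨z, ⟨l, hl, hz⟩, rfl⟩
    exact image_mem_closure F hr i hl hz
  have hSunion : fixedPtsOfComps F ⊆ ⋃ i, F i '' fixedPtsOfComps F := by
    rintro z ⟨l, hl, hz⟩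
    cases l with
    | nil => exact absurd rfl hl
    | cons i t =>
      have hz' : F i (gcomp F t z) = z := hz
      refine Set.mem_iUnion.2 ⟨i, gcomp F t z, ⟨t ++ [i], by simp, ?_⟩, hz'⟩
      show gcomp F (t ++ [i]) (gcomp F t z) = gcomp F t z
      rw [gcomp_append]
      show gcomp F t (F i (gcomp F t z)) = gcomp F t z
      rw [hz']
  have dir1 : closure (⋃ i, F i '' E) ⊆ E := by
    refine closure_minimal (Set.iUnion_subset fun i => ?_) isClosed_closure
    calc F i '' E ⊆ closure (F i '' fixedPtsOfComps F) :=
          image_closure_subset_closure_image (hr i).2.continuous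
    _ ⊆ closure E := closure_mono (himg i)
    _ = E := closure_closure
  have dir2 : E ⊆ closure (⋃ i, F i '' E) := by
    refine closure_minimal (fun z hz => ?_) isClosed_closure
    apply subset_closure
    obtain ⟨i, hi⟩ := Set.mem_iUnion.1 (hSunion hz)
    exact Set.mem_iUnion.2 ⟨i, Set.image_mono subset_closure hi⟩
  exact Set.Subset.antisymm dir2 dir1
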